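/- Every allocation problem with capacitated valuations admits a Walrasian equilibrium: for any finite set G of goods and any n agents, agent i having nonnegative per-item values w_i : G → ℝ and capacity c_i ∈ ℕ with induced capacitated valuation v_i, there exist nonnegative item prices p : G → ℝ and pairwise disjoint bundles a_1, …, a_n ⊆ G such that for every agent i the bundle a_i maximizes v_i(S) − Σ_{j∈S} p j over all bundles S ⊆ G, and every good not contained in any a_i has price 0. -/

import Mathlib

set_option linter.unusedSectionVars false
set_option maxHeartbeats 1000000

/-- The capacitated valuation induced by per-item values `w` and capacity `c`:
the maximum, over subsets `T ⊆ S` with `|T| ≤ c`, of `∑ j ∈ T, w j`. -/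
noncomputable def capVal {G : Type*} [DecidableEq G] (w : G → ℝ) (c : ℕ)
    (S : Finset G) : ℝ :=
  (S.powerset.filter fun T => T.card ≤ c).sup' ⟨∅, by simp⟩ (fun T => ∑ j ∈ T, w j)


open Finset

namespace CapWalras

variable {G : Type*} [Fintype G] [DecidableEq G]

noncomputable def capVal' (w : G → ℝ) (c : ℕ) (S : Finset G) : ℝ :=
  (S.powerset.filter fun T => T.card ≤ c).sup' ⟨∅, by simp⟩ (fun T => ∑ j ∈ T, w j)

noncomputable def Tsp (G : Type*) [Fintype G] [DecidableEq G] (c : ℕ) : Finset (Finset G) :=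
  Finset.univ.powerset.filter fun T => T.card ≤ c

lemma Tsp_ne (c : ℕ) : (Tsp G c).Nonempty := ⟨∅, by simp [Tsp]⟩

lemma mem_Tsp {c : ℕ} {T : Finset G} : T ∈ Tsp G c ↔ T.card ≤ c := by simp [Tsp]

noncomputable def us (w : G → ℝ) (c : ℕ) (p : G → ℝ) : ℝ :=
  (Tsp G c).sup' (Tsp_ne c) (fun T => ∑ j ∈ T, (w j - p j))

lemma us_le {w : G → ℝ} {c : ℕ} {p : G → ℝ} {x : ℝ}
    (h : ∀ T : Finset G, T.card ≤ c → ∑ j ∈ T, (w j - p j) ≤ x) : us w c p ≤ x :=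
  Finset.sup'_le _ _ fun T hT => h T (mem_Tsp.1 hT)

lemma le_us {w : G → ℝ} {c : ℕ} {p : G → ℝ} {T : Finset G} (hT : T.card ≤ c) :
    ∑ j ∈ T, (w j - p j) ≤ us w c p := by
  unfold us; exact Finset.le_sup' (fun T => ∑ j ∈ T, (w j - p j)) (mem_Tsp.2 hT)

lemma us_nonneg (w : G → ℝ) (c : ℕ) (p : G → ℝ) : 0 ≤ us w c p := by
  have := le_us (w := w) (p := p) (T := (∅ : Finset G)) (c := c) (by simp)
  simpa using this

lemma continuous_sup' {ι : Type*} (s : Finset ι) (hs : s.Nonempty) (F : ι → (G → ℝ) → ℝ)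
    (hF : ∀ b ∈ s, Continuous (F b)) :
    Continuous (fun p => s.sup' hs (fun b => F b p)) := by
  revert hF
  induction hs using Finset.Nonempty.cons_induction with
  | singleton a =>
      intro hF
      simpa using hF a (by simp)
  | cons a s ha hs ih =>
      intro hF
      have h1 : Continuous (F a) := hF a (by simp)
      have h2 := ih (fun b hb => hF b (by simp [hb]))
      have : (fun p => (Finset.cons a s ha).sup' (Finset.cons_nonempty ha) (fun b => F b p))
          = fun p => max (F a p) (s.sup' hs (fun b => F b p)) := by
        funext p; exact Finset.sup'_cons hs _
      rw [this]
      exact h1.max h2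

lemma continuous_us (w : G → ℝ) (c : ℕ) : Continuous (fun p => us w c p) := by
  apply continuous_sup'
  intro T _
  exact continuous_finset_sum _ fun j _ => continuous_const.sub (continuous_apply j)

lemma capVal'_sub_le {w : G → ℝ} {c : ℕ} {p : G → ℝ} (hp : ∀ j, 0 ≤ p j) (S : Finset G) :
    capVal' w c S - ∑ j ∈ S, p j ≤ us w c p := by
  rw [capVal', sub_le_iff_le_add]
  apply Finset.sup'_le
  intro T hT
  rw [Finset.mem_filter, Finset.mem_powerset] at hT
  have h1 : ∑ j ∈ T, (w j - p j) ≤ us w c p := le_us hT.2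
  have h2 : ∑ j ∈ T, p j ≤ ∑ j ∈ S, p j :=
    Finset.sum_le_sum_of_subset_of_nonneg hT.1 fun j _ _ => hp j
  have := Finset.sum_sub_distrib (s := T) (f := w) (g := p)
  nlinarith [h1, h2]

lemma capVal'_eq_sum {w : G → ℝ} {c : ℕ} {S : Finset G} (hw : ∀ j, 0 ≤ w j)
    (hS : S.card ≤ c) : capVal' w c S = ∑ j ∈ S, w j := by
  unfold capVal'
  apply le_antisymm
  · apply Finset.sup'_le
    intro T hT
    rw [Finset.mem_filter, Finset.mem_powerset] at hT
    exact Finset.sum_le_sum_of_subset_of_nonneg hT.1 fun j _ _ => hw j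
  · exact Finset.le_sup' (fun T => ∑ j ∈ T, w j) (by simp [hS])



section MD

variable {L R : Type*} [Fintype R] [DecidableEq L] [DecidableEq R]

/-- alternating walk -/
def walkSeq (f : L → R) (g : R → L) (b₀ : R) : ℕ → R := fun t => (fun b => f (g b))^[t] b₀

lemma walkSeq_zero (f : L → R) (g : R → L) (b₀ : R) : walkSeq f g b₀ 0 = b₀ := rfl

lemma walkSeq_succ (f : L → R) (g : R → L) (b₀ : R) (t : ℕ) :
    walkSeq f g b₀ (t + 1) = f (g (walkSeq f g b₀ t)) :=
  Function.iterate_succ_apply' _ _ _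

lemma md_step (rel : L → R → Prop) (A : Finset L) (B : Finset R) (f : L → R) (g : R → L)
    (hfinj : Set.InjOn f A) (hfrel : ∀ a ∈ A, rel a (f a))
    (hginj : Set.InjOn g B) (hgrel : ∀ b ∈ B, rel (g b) b)
    {b₀ : R} (hb₀B : b₀ ∈ B) (hb₀f : b₀ ∉ A.image f) :
    ∃ (A' : Finset L) (f' : L → R), A ⊆ A' ∧ Set.InjOn f' A' ∧
      (∀ a ∈ A', rel a (f' a)) ∧
      (∀ b ∈ B, b ∈ A.image f → b ∈ A'.image f') ∧ b₀ ∈ A'.image f' := by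
  classical
  set seq : ℕ → R := walkSeq f g b₀ with hseq
  have hzero : seq 0 = b₀ := rfl
  have hsucc : ∀ t, seq (t + 1) = f (g (seq t)) := fun t => walkSeq_succ f g b₀ t
  -- the walk must stop
  have hstop : ∃ t, ¬(seq t ∈ B ∧ g (seq t) ∈ A) := by
    by_contra h
    push_neg at h
    have hall : ∀ t, seq t ∈ B ∧ g (seq t) ∈ A := by
      intro t
      by_contra h'
      rw [not_and_or] at h'
      rcases h' with h' | h'
      · exact h' ((h t).imp_left id |>.1)
      · exact h' (h t).2
    have key : ∀ s t, s < t → seq s ≠ seq t := by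
      intro s
      induction s with
      | zero =>
        intro t ht heq
        obtain ⟨t', rfl⟩ := Nat.exists_eq_succ_of_ne_zero (by omega : t ≠ 0)
        apply hb₀f
        rw [Finset.mem_image]
        exact ⟨g (seq t'), (hall t').2, by rw [← hsucc t', ← heq]; exact hzero⟩
      | succ s ih =>
        intro t ht heq
        obtain ⟨t', rfl⟩ := Nat.exists_eq_succ_of_ne_zero (by omega : t ≠ 0)
        have h1 : f (g (seq s)) = f (g (seq t')) := by
          rw [← hsucc s, ← hsucc t']; exact heq
        have h2 : g (seq s) = g (seq t') := hfinj (hall s).2 (hall t').2 h1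
        have h3 : seq s = seq t' := hginj (hall s).1 (hall t').1 h2
        exact ih t' (by omega) h3
    obtain ⟨x, y, hxy, heq⟩ := Finite.exists_ne_map_eq_of_infinite seq
    rcases lt_or_gt_of_ne hxy with h | h
    · exact key x y h heq
    · exact key y x h heq.symm
  set T := Nat.find hstop with hTdef
  have hT : ¬(seq T ∈ B ∧ g (seq T) ∈ A) := Nat.find_spec hstop
  have hpre : ∀ s, s < T → seq s ∈ B ∧ g (seq s) ∈ A := by
    intro s hs
    have := Nat.find_min hstop hs
    rw [not_not] at this
    exact this
  -- distinctness along the walk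
  have key : ∀ s t, s < t → t ≤ T → seq s ≠ seq t := by
    intro s
    induction s with
    | zero =>
      intro t ht htT heq
      obtain ⟨t', rfl⟩ := Nat.exists_eq_succ_of_ne_zero (by omega : t ≠ 0)
      apply hb₀f
      rw [Finset.mem_image]
      exact ⟨g (seq t'), (hpre t' (by omega)).2, by rw [← hsucc t', ← heq]; exact hzero⟩
    | succ s ih =>
      intro t ht htT heq
      obtain ⟨t', rfl⟩ := Nat.exists_eq_succ_of_ne_zero (by omega : t ≠ 0)
      have h1 : f (g (seq s)) = f (g (seq t')) := by
        rw [← hsucc s, ← hsucc t']; exact heq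
      have hsv := hpre s (by omega)
      have htv := hpre t' (by omega)
      have h2 : g (seq s) = g (seq t') := hfinj hsv.2 htv.2 h1
      have h3 : seq s = seq t' := hginj hsv.1 htv.1 h2
      exact ih t' (by omega) (by omega) h3
  have d1 : ∀ s t, s ≤ T → t ≤ T → seq s = seq t → s = t := by
    intro s t hs ht heq
    rcases lt_trichotomy s t with h | h | h
    · exact absurd heq (key s t h ht)
    · exact h
    · exact absurd heq.symm (key t s h hs)
  -- walk vertices on the left
  set W : Finset L := (Finset.range T).image (fun s => g (seq s)) with hW
  have hWA : ∀ a ∈ W, a ∈ A := by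
    intro a ha
    rw [hW, Finset.mem_image] at ha
    obtain ⟨s, hs, rfl⟩ := ha
    exact (hpre s (Finset.mem_range.1 hs)).2
  have d2 : ∀ s, s ≤ T → ∀ a ∈ A, a ∉ W → seq s ≠ f a := by
    intro s hs a haA haW heq
    cases s with
    | zero =>
      exact hb₀f (Finset.mem_image.2 ⟨a, haA, heq.symm⟩)
    | succ s' =>
      have hs' : s' < T := by omega
      have h1 : f (g (seq s')) = f a := (hsucc s').symm.trans heq
      have h2 : g (seq s') = a := hfinj (hpre s' hs').2 haA h1
      exact haW (by rw [hW, Finset.mem_image]; exact ⟨s', Finset.mem_range.2 hs', h2⟩)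
  -- the rerouted function
  set f' : L → R := fun a => if h : ∃ s, s < T ∧ g (seq s) = a then seq (Nat.find h) else f a
    with hf'
  have w1 : ∀ s, s < T → f' (g (seq s)) = seq s := by
    intro s hs
    have hex : ∃ s', s' < T ∧ g (seq s') = g (seq s) := ⟨s, hs, rfl⟩
    have : f' (g (seq s)) = seq (Nat.find hex) := by rw [hf']; exact dif_pos hex
    rw [this]
    have hspec := Nat.find_spec hex
    exact hginj (hpre _ hspec.1).1 (hpre s hs).1 hspec.2
  have w2 : ∀ a, a ∉ W → f' a = f a := by
    intro a haW
    rw [hf']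
    apply dif_neg
    rintro ⟨s, hs, rfl⟩
    exact haW (by rw [hW, Finset.mem_image]; exact ⟨s, Finset.mem_range.2 hs, rfl⟩)
  have hmemW : ∀ a ∈ W, ∃ s, s < T ∧ g (seq s) = a := by
    intro a ha
    rw [hW, Finset.mem_image] at ha
    obtain ⟨s, hs, rfl⟩ := ha
    exact ⟨s, Finset.mem_range.1 hs, rfl⟩
  by_cases hTB : seq T ∈ B
  · -- case 1 : the walk stops because g (seq T) ∉ A
    have hgTA : g (seq T) ∉ A := fun h => hT ⟨hTB, h⟩
    set lT : L := g (seq T) with hlT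
    have hlTW : lT ∉ W := by
      intro h
      obtain ⟨s, hs, hgs⟩ := hmemW lT h
      have : seq s = seq T := hginj (hpre s hs).1 hTB hgs
      exact absurd (d1 s T (by omega) le_rfl this) (by omega)
    refine ⟨insert lT A, Function.update f' lT (seq T), Finset.subset_insert _ _, ?_, ?_, ?_, ?_⟩
    · -- injectivity
      intro x hx y hy hxy
      simp only [Finset.coe_insert, Set.mem_insert_iff, Finset.mem_coe] at hx hy
      have val : ∀ z, z ∈ insert lT A → (z = lT ∧ Function.update f' lT (seq T) z = seq T) ∨
          (∃ s, s < T ∧ z = g (seq s) ∧ Function.update f' lT (seq T) z = seq s) ∨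
          (z ∈ A ∧ z ∉ W ∧ Function.update f' lT (seq T) z = f z) := by
        intro z hz
        rcases eq_or_ne z lT with rfl | hzl
        · exact Or.inl ⟨rfl, Function.update_self _ _ _⟩
        · have hzA : z ∈ A := by
            rcases Finset.mem_insert.1 hz with h | h
            · exact absurd h hzl
            · exact h
          by_cases hzW : z ∈ W
          · obtain ⟨s, hs, hgs⟩ := hmemW z hzW
            refine Or.inr (Or.inl ⟨s, hs, hgs.symm, ?_⟩)
            rw [Function.update_of_ne hzl, ← hgs]
            exact w1 s hs
          · exact Or.inr (Or.inr ⟨hzA, hzW, by rw [Function.update_of_ne hzl]; exact w2 z hzW⟩)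
      have hx' := val x (by simpa using hx)
      have hy' := val y (by simpa using hy)
      rcases hx' with ⟨hx1, hx2⟩ | ⟨s, hs, hx1, hx2⟩ | ⟨hxA, hxW, hx2⟩ <;>
        rcases hy' with ⟨hy1, hy2⟩ | ⟨t, ht, hy1, hy2⟩ | ⟨hyA, hyW, hy2⟩
      · rw [hx1, hy1]
      · rw [hx2, hy2] at hxy
        exact absurd (d1 T t le_rfl (by omega) hxy) (by omega)
      · rw [hx2, hy2] at hxy
        exact absurd hxy (d2 T le_rfl y hyA hyW)
      · rw [hx2, hy2] at hxy
        exact absurd (d1 s T (by omega) le_rfl hxy) (by omega)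
      · rw [hx2, hy2] at hxy
        rw [hx1, hy1, d1 s t (by omega) (by omega) hxy]
      · rw [hx2, hy2] at hxy
        exact absurd hxy (d2 s (by omega) y hyA hyW)
      · rw [hx2, hy2] at hxy
        exact absurd hxy.symm (d2 T le_rfl x hxA hxW)
      · rw [hx2, hy2] at hxy
        exact absurd hxy.symm (d2 t (by omega) x hxA hxW)
      · rw [hx2, hy2] at hxy
        exact hfinj hxA hyA hxy
    · -- rel
      intro a ha
      rcases Finset.mem_insert.1 ha with rfl | haA
      · rw [Function.update_self]
        exact hgrel _ hTB
      · have halT : a ≠ lT := fun h => hgTA (h ▸ haA)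
        rw [Function.update_of_ne halT]
        by_cases haW : a ∈ W
        · obtain ⟨s, hs, hgs⟩ := hmemW a haW
          rw [← hgs, w1 s hs]
          exact hgrel _ (hpre s hs).1
        · rw [w2 a haW]
          exact hfrel a haA
    · -- coverage of old B-elements
      intro b hbB hbold
      rw [Finset.mem_image] at hbold ⊢
      obtain ⟨a, haA, rfl⟩ := hbold
      by_cases haW : a ∈ W
      · obtain ⟨s, hs, hgs⟩ := hmemW a haW
        have : f a = seq (s + 1) := by rw [hsucc s, hgs]
        rcases eq_or_lt_of_le (show s + 1 ≤ T by omega) with h | h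
        · refine ⟨lT, Finset.mem_insert_self _ _, ?_⟩
          rw [Function.update_self, this, h]
        · refine ⟨g (seq (s + 1)), Finset.mem_insert_of_mem (hpre (s + 1) h).2, ?_⟩
          have hne : g (seq (s + 1)) ≠ lT := by
            intro hcon
            have : seq (s + 1) = seq T := hginj (hpre (s + 1) h).1 hTB hcon
            exact absurd (d1 (s + 1) T (by omega) le_rfl this) (by omega)
          rw [Function.update_of_ne hne, w1 (s + 1) h, this]
      · refine ⟨a, Finset.mem_insert_of_mem haA, ?_⟩
        have halT : a ≠ lT := fun h => hgTA (h ▸ haA)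
        rw [Function.update_of_ne halT, w2 a haW]
    · -- b₀ covered
      rw [Finset.mem_image]
      rcases Nat.eq_zero_or_pos T with h | h
      · refine ⟨lT, Finset.mem_insert_self _ _, ?_⟩
        rw [Function.update_self, h]
        exact hzero
      · refine ⟨g (seq 0), Finset.mem_insert_of_mem (hpre 0 h).2, ?_⟩
        have hne : g (seq 0) ≠ lT := by
          intro hcon
          have : seq 0 = seq T := hginj (hpre 0 h).1 hTB hcon
          exact absurd (d1 0 T (by omega) le_rfl this) (by omega)
        rw [Function.update_of_ne hne, w1 0 h]
        exact hzero
  · -- case 2 : the walk stops because seq T ∉ B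
    have hT0 : T ≠ 0 := by
      intro h
      apply hTB
      rw [h]
      exact hb₀B
    refine ⟨A, f', Finset.Subset.refl _, ?_, ?_, ?_, ?_⟩
    · intro x hx y hy hxy
      rw [Finset.mem_coe] at hx hy
      have val : ∀ z, z ∈ A →
          (∃ s, s < T ∧ z = g (seq s) ∧ f' z = seq s) ∨ (z ∉ W ∧ f' z = f z) := by
        intro z hz
        by_cases hzW : z ∈ W
        · obtain ⟨s, hs, hgs⟩ := hmemW z hzW
          exact Or.inl ⟨s, hs, hgs.symm, by rw [← hgs]; exact w1 s hs⟩
        · exact Or.inr ⟨hzW, w2 z hzW⟩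
      rcases val x hx with ⟨s, hs, hx1, hx2⟩ | ⟨hxW, hx2⟩ <;>
        rcases val y hy with ⟨t, ht, hy1, hy2⟩ | ⟨hyW, hy2⟩
      · rw [hx2, hy2] at hxy
        rw [hx1, hy1, d1 s t (by omega) (by omega) hxy]
      · rw [hx2, hy2] at hxy
        exact absurd hxy (d2 s (by omega) y hy hyW)
      · rw [hx2, hy2] at hxy
        exact absurd hxy.symm (d2 t (by omega) x hx hxW)
      · rw [hx2, hy2] at hxy
        exact hfinj hx hy hxy
    · intro a haA
      by_cases haW : a ∈ W
      · obtain ⟨s, hs, hgs⟩ := hmemW a haW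
        rw [← hgs, w1 s hs]
        exact hgrel _ (hpre s hs).1
      · rw [w2 a haW]
        exact hfrel a haA
    · intro b hbB hbold
      rw [Finset.mem_image] at hbold ⊢
      obtain ⟨a, haA, rfl⟩ := hbold
      by_cases haW : a ∈ W
      · obtain ⟨s, hs, hgs⟩ := hmemW a haW
        have hfa : f a = seq (s + 1) := by rw [hsucc s, hgs]
        rcases eq_or_lt_of_le (show s + 1 ≤ T by omega) with h | h
        · exact absurd (by rw [← h, ← hfa]; exact hbB) hTB
        · exact ⟨g (seq (s + 1)), (hpre (s + 1) h).2, by rw [w1 (s + 1) h, hfa]⟩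
      · exact ⟨a, haA, by rw [w2 a haW]⟩
    · rw [Finset.mem_image]
      refine ⟨g (seq 0), (hpre 0 (by omega)).2, ?_⟩
      rw [w1 0 (by omega)]
      exact hzero

lemma md (rel : L → R → Prop) (B : Finset R) (g : R → L)
    (hginj : Set.InjOn g B) (hgrel : ∀ b ∈ B, rel (g b) b)
    (N : ℕ) (A : Finset L) (f : L → R)
    (hfinj : Set.InjOn f A) (hfrel : ∀ a ∈ A, rel a (f a))
    (hN : (B \ A.image f).card ≤ N) :
    ∃ (A' : Finset L) (f' : L → R), A ⊆ A' ∧ Set.InjOn f' A' ∧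
      (∀ a ∈ A', rel a (f' a)) ∧ B ⊆ A'.image f' := by
  classical
  induction N generalizing A f with
  | zero =>
    refine ⟨A, f, Finset.Subset.refl _, hfinj, hfrel, ?_⟩
    intro b hb
    by_contra hbim
    have : b ∈ B \ A.image f := Finset.mem_sdiff.2 ⟨hb, hbim⟩
    rw [Finset.card_eq_zero.1 (Nat.le_zero.1 hN)] at this
    exact absurd this (Finset.notMem_empty b)
  | succ N ih =>
    by_cases hcov : B ⊆ A.image f
    · exact ⟨A, f, Finset.Subset.refl _, hfinj, hfrel, hcov⟩
    · obtain ⟨b₀, hb₀B, hb₀f⟩ := Finset.not_subset.1 hcov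
      obtain ⟨A₁, f₁, hA₁, hinj₁, hrel₁, hcov₁, hb₀₁⟩ :=
        md_step rel A B f g hfinj hfrel hginj hgrel hb₀B hb₀f
      have hsub : B \ A₁.image f₁ ⊆ (B \ A.image f).erase b₀ := by
        intro b hb
        rw [Finset.mem_sdiff] at hb
        rw [Finset.mem_erase, Finset.mem_sdiff]
        refine ⟨?_, hb.1, ?_⟩
        · intro h
          exact hb.2 (h ▸ hb₀₁)
        · intro h
          exact hb.2 (hcov₁ b hb.1 h)
      have hcard : (B \ A₁.image f₁).card ≤ N := by
        have h1 := Finset.card_le_card hsub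
        have h2 : ((B \ A.image f).erase b₀).card < (B \ A.image f).card :=
          Finset.card_erase_lt_of_mem (Finset.mem_sdiff.2 ⟨hb₀B, hb₀f⟩)
        omega
      obtain ⟨A', f', hA', hinj', hrel', hcov'⟩ := ih A₁ f₁ hinj₁ hrel₁ hcard
      exact ⟨A', f', hA₁.trans hA', hinj', hrel', hcov'⟩

end MD



variable {G : Type*} [Fintype G] [DecidableEq G]

/-- structure of optimal bundles when no good is forced -/
lemma structure_lemma {c : ℕ} {m : G → ℝ} {θ s : ℝ}
    (hθex : ∃ j, m j = θ) (hθub : ∀ j, m j ≤ θ) (hθpos : 0 < θ)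
    (hub : ∀ T : Finset G, T.card ≤ c → ∑ x ∈ T, m x ≤ s)
    (hnf : ∀ j : G, ∃ T : Finset G, T.card ≤ c ∧ s ≤ ∑ x ∈ T, m x ∧ j ∉ T) :
    c ≤ (univ.filter fun j => m j = θ).card ∧ s = c * θ := by
  classical
  set Tθ : Finset G := univ.filter fun j => m j = θ with hTθ
  have hmemTθ : ∀ j, j ∈ Tθ ↔ m j = θ := by intro j; simp [hTθ]
  have hcard : c ≤ Tθ.card := by
    by_contra hlt
    push_neg at hlt
    obtain ⟨j₀, hj₀⟩ := hθex
    have hj₀T : j₀ ∈ Tθ := (hmemTθ j₀).2 hj₀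
    obtain ⟨T, hTc, hTs, hjT⟩ := hnf j₀
    rcases lt_or_eq_of_le hTc with hTlt | hTeq
    · have h1 : (insert j₀ T).card ≤ c := by
        rw [Finset.card_insert_of_notMem hjT]; omega
      have h2 : ∑ x ∈ insert j₀ T, m x = θ + ∑ x ∈ T, m x := by
        rw [Finset.sum_insert hjT, hj₀]
      have := hub _ h1
      rw [h2] at this
      nlinarith
    · have hnsub : ¬ T ⊆ Tθ := by
        intro hsub
        have := Finset.card_le_card hsub
        omega
      obtain ⟨j₁, hj₁T, hj₁Tθ⟩ := Finset.not_subset.1 hnsub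
      have hj₁lt : m j₁ < θ := lt_of_le_of_ne (hθub j₁) (fun h => hj₁Tθ ((hmemTθ j₁).2 h))
      have hj₀e : j₀ ∉ T.erase j₁ := fun h => hjT (Finset.mem_of_mem_erase h)
      have h1 : (insert j₀ (T.erase j₁)).card ≤ c := by
        rw [Finset.card_insert_of_notMem hj₀e, Finset.card_erase_of_mem hj₁T]
        omega
      have h2 : ∑ x ∈ insert j₀ (T.erase j₁), m x = θ + (∑ x ∈ T, m x - m j₁) := by
        rw [Finset.sum_insert hj₀e, hj₀]
        congr 1
        have := Finset.add_sum_erase T m hj₁T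
        linarith
      have := hub _ h1
      rw [h2] at this
      nlinarith
  refine ⟨hcard, le_antisymm ?_ ?_⟩
  · obtain ⟨j₀, hj₀⟩ := hθex
    obtain ⟨T, hTc, hTs, _⟩ := hnf j₀
    have h1 : ∑ x ∈ T, m x ≤ (T.card : ℝ) * θ := by
      calc ∑ x ∈ T, m x ≤ ∑ _x ∈ T, θ := Finset.sum_le_sum (fun x _ => hθub x)
      _ = (T.card : ℝ) * θ := by rw [Finset.sum_const, nsmul_eq_mul]
    have h2 : (T.card : ℝ) * θ ≤ (c : ℝ) * θ := by
      apply mul_le_mul_of_nonneg_right _ hθpos.le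
      exact_mod_cast hTc
    linarith
  · obtain ⟨Tc, hTcsub, hTccard⟩ := Finset.exists_subset_card_eq hcard
    have h1 : ∑ x ∈ Tc, m x = (c : ℝ) * θ := by
      rw [Finset.sum_congr rfl (fun x hx => (hmemTθ x).1 (hTcsub hx)), Finset.sum_const,
        hTccard, nsmul_eq_mul]
    have := hub Tc (le_of_eq hTccard)
    linarith

lemma sum_bound {c : ℕ} {T D : Finset G} (hT : T.card ≤ c) {f : G → ℝ} {a ε : ℝ}
    (ha : 0 ≤ a) (hε : 0 ≤ ε) (hf : ∀ x ∈ T, f x ≤ a + (if x ∈ D then ε else 0)) :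
    ∑ x ∈ T, f x ≤ (c : ℝ) * a + ε * (min c D.card : ℕ) := by
  classical
  have h1 : ∑ x ∈ T, f x ≤ ∑ x ∈ T, (a + (if x ∈ D then ε else 0)) :=
    Finset.sum_le_sum hf
  have h2 : ∑ x ∈ T, (a + (if x ∈ D then ε else 0))
      = (T.card : ℝ) * a + ε * ((T ∩ D).card : ℕ) := by
    rw [Finset.sum_add_distrib, Finset.sum_const, nsmul_eq_mul]
    congr 1
    rw [Finset.sum_ite_mem, Finset.sum_const, nsmul_eq_mul, mul_comm]
  have h3 : (T ∩ D).card ≤ min c D.card := by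
    apply le_min
    · exact le_trans (Finset.card_le_card (Finset.inter_subset_left)) hT
    · exact Finset.card_le_card (Finset.inter_subset_right)
  have h4 : (T.card : ℝ) * a ≤ (c : ℝ) * a := by
    apply mul_le_mul_of_nonneg_right _ ha
    exact_mod_cast hT
  have h5 : ε * ((T ∩ D).card : ℝ) ≤ ε * ((min c D.card : ℕ) : ℝ) := by
    apply mul_le_mul_of_nonneg_left _ hε
    exact_mod_cast h3
  linarith



lemma assemble {G : Type*} [Fintype G] [DecidableEq G] {n : ℕ} (c : Fin n → ℕ)
    (pool : Fin n → Finset G) (Bt : Fin n → Prop)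
    (Pos : Finset G) (hGne : Nonempty G)
    (hSlot : Nonempty ((i : Fin n) × Fin (c i)))
    (hfill : ∀ I : Finset (Fin n), I.Nonempty → (∀ i ∈ I, Bt i) →
      ∑ i ∈ I, c i ≤ (I.biUnion pool).card)
    (hcover : ∀ J : Finset G, J ⊆ Pos → J.card ≤ ∑ i, min (c i) ((pool i ∩ J).card)) :
    ∃ X : Fin n → Finset G,
      (∀ i, X i ⊆ pool i) ∧ (∀ i, (X i).card ≤ c i) ∧ (∀ i, Bt i → (X i).card = c i) ∧
      (∀ i k, i ≠ k → Disjoint (X i) (X k)) ∧ (∀ j ∈ Pos, ∃ i, j ∈ X i) := by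
  classical
  -- Hall for filling the B-agents
  have hall1 : ∀ sF : Finset {s : (i : Fin n) × Fin (c i) // Bt s.fst},
      sF.card ≤ (sF.biUnion fun s => pool s.1.fst).card := by
    intro sF
    rcases sF.eq_empty_or_nonempty with rfl | hne
    · simp
    · set I : Finset (Fin n) := sF.image fun x => x.1.fst with hI
      have hIne : I.Nonempty := hne.image _
      have hIB : ∀ i ∈ I, Bt i := by
        intro i hi
        rw [hI, Finset.mem_image] at hi
        obtain ⟨x, _, rfl⟩ := hi
        exact x.2
      have h1 : sF.card ≤ ∑ i ∈ I, c i := by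
        have e1 : sF.card = (sF.image Subtype.val).card :=
          (Finset.card_image_of_injective sF Subtype.val_injective).symm
        have e2 : sF.image Subtype.val ⊆ I.sigma fun i => (univ : Finset (Fin (c i))) := by
          intro x hx
          rw [Finset.mem_image] at hx
          obtain ⟨y, hy, rfl⟩ := hx
          rw [Finset.mem_sigma]
          exact ⟨Finset.mem_image_of_mem _ hy, Finset.mem_univ _⟩
        have e3 : (I.sigma fun i => (univ : Finset (Fin (c i)))).card = ∑ i ∈ I, c i := by
          rw [Finset.card_sigma]
          exact Finset.sum_congr rfl fun i _ => by simp
        rw [e1, ← e3]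
        exact Finset.card_le_card e2
      have h2 : sF.biUnion (fun s => pool s.1.fst) = I.biUnion pool := by
        ext j
        simp only [Finset.mem_biUnion, hI, Finset.mem_image]
        constructor
        · rintro ⟨x, hx, hj⟩
          exact ⟨x.1.fst, ⟨x, hx, rfl⟩, hj⟩
        · rintro ⟨i, ⟨x, hx, rfl⟩, hj⟩
          exact ⟨x, hx, hj⟩
      rw [h2]
      exact h1.trans (hfill I hIne hIB)
  obtain ⟨fB, hfBinj, hfBmem⟩ :=
    (Finset.all_card_le_biUnion_card_iff_exists_injective
      (fun s : {s : (i : Fin n) × Fin (c i) // Bt s.fst} => pool s.1.fst)).1 hall1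
  -- Hall for covering the positively priced goods
  have hall2 : ∀ sF : Finset {j : G // j ∈ Pos},
      sF.card ≤ (sF.biUnion fun j =>
        (univ.filter fun i => (j : G) ∈ pool i).sigma fun i => (univ : Finset (Fin (c i)))).card := by
    intro sF
    set J : Finset G := sF.image Subtype.val with hJ
    have hJsub : J ⊆ Pos := by
      intro j hj
      rw [hJ, Finset.mem_image] at hj
      obtain ⟨x, _, rfl⟩ := hj
      exact x.2
    have hJcard : J.card = sF.card := Finset.card_image_of_injective sF Subtype.val_injective
    set If : Finset (Fin n) := univ.filter fun i => ∃ j ∈ J, j ∈ pool i with hIf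
    have h1 : ∑ i, min (c i) ((pool i ∩ J).card) ≤ ∑ i ∈ If, c i := by
      rw [hIf, Finset.sum_filter]
      apply Finset.sum_le_sum
      intro i _
      by_cases hi : ∃ j ∈ J, j ∈ pool i
      · rw [if_pos hi]
        exact min_le_left _ _
      · rw [if_neg hi]
        have : pool i ∩ J = ∅ := by
          rw [Finset.eq_empty_iff_forall_notMem]
          intro j hj
          rw [Finset.mem_inter] at hj
          exact hi ⟨j, hj.2, hj.1⟩
        simp [this]
    have h2 : (sF.biUnion fun j =>
        (univ.filter fun i => (j : G) ∈ pool i).sigma fun i => (univ : Finset (Fin (c i))))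
        = If.sigma fun i => (univ : Finset (Fin (c i))) := by
      ext x
      constructor
      · intro hx
        rw [Finset.mem_biUnion] at hx
        obtain ⟨j, hj, hx⟩ := hx
        rw [Finset.mem_sigma, Finset.mem_filter] at hx
        rw [Finset.mem_sigma]
        refine ⟨?_, Finset.mem_univ _⟩
        rw [hIf, Finset.mem_filter]
        exact ⟨Finset.mem_univ _, ⟨(j : G), Finset.mem_image_of_mem _ hj, hx.1.2⟩⟩
      · intro hx
        rw [Finset.mem_sigma] at hx
        have hx1 := hx.1
        rw [hIf, Finset.mem_filter] at hx1
        obtain ⟨-, j, hjJ, hjp⟩ := hx1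
        rw [hJ, Finset.mem_image] at hjJ
        obtain ⟨y, hy, rfl⟩ := hjJ
        rw [Finset.mem_biUnion]
        exact ⟨y, hy, by
          rw [Finset.mem_sigma, Finset.mem_filter]
          exact ⟨⟨Finset.mem_univ _, hjp⟩, Finset.mem_univ _⟩⟩
    have h3 : (If.sigma fun i => (univ : Finset (Fin (c i)))).card = ∑ i ∈ If, c i := by
      rw [Finset.card_sigma]
      exact Finset.sum_congr rfl fun i _ => by simp
    rw [h2, h3, ← hJcard]
    exact (hcover J hJsub).trans h1
  obtain ⟨gP, hgPinj, hgPmem⟩ :=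
    (Finset.all_card_le_biUnion_card_iff_exists_injective
      (fun j : {j : G // j ∈ Pos} =>
        (univ.filter fun i => (j : G) ∈ pool i).sigma fun i => (univ : Finset (Fin (c i))))).1 hall2
  have hgPpool : ∀ x : {j : G // j ∈ Pos}, (x : G) ∈ pool (gP x).fst := by
    intro x
    have := hgPmem x
    rw [Finset.mem_sigma, Finset.mem_filter] at this
    exact this.1.2
  -- combine via the augmenting lemma
  set rel : ((i : Fin n) × Fin (c i)) → G → Prop := fun s j => j ∈ pool s.fst with hrel
  set A : Finset ((i : Fin n) × Fin (c i)) := univ.filter fun s => Bt s.fst with hA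
  set f : ((i : Fin n) × Fin (c i)) → G :=
    fun s => if h : Bt s.fst then fB ⟨s, h⟩ else Classical.arbitrary G with hf
  set g : G → ((i : Fin n) × Fin (c i)) :=
    fun j => if h : j ∈ Pos then gP ⟨j, h⟩ else Classical.arbitrary _ with hg
  have hfinj : Set.InjOn f A := by
    intro x hx y hy hxy
    rw [Finset.mem_coe, hA, Finset.mem_filter] at hx hy
    rw [hf] at hxy
    simp only [dif_pos hx.2, dif_pos hy.2] at hxy
    have := hfBinj hxy
    exact congrArg Subtype.val this
  have hfrel : ∀ a ∈ A, rel a (f a) := by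
    intro a ha
    rw [hA, Finset.mem_filter] at ha
    rw [hrel, hf]
    simp only [dif_pos ha.2]
    exact hfBmem ⟨a, ha.2⟩
  have hginj : Set.InjOn g Pos := by
    intro x hx y hy hxy
    rw [Finset.mem_coe] at hx hy
    rw [hg] at hxy
    simp only [dif_pos hx, dif_pos hy] at hxy
    have := hgPinj hxy
    exact congrArg Subtype.val this
  have hgrel : ∀ b ∈ Pos, rel (g b) b := by
    intro b hb
    rw [hrel, hg]
    simp only [dif_pos hb]
    exact hgPpool ⟨b, hb⟩
  obtain ⟨A', f', hAA', hinj', hrel', hcov'⟩ :=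
    md rel Pos g hginj hgrel (Pos \ A.image f).card A f hfinj hfrel le_rfl
  -- the allocation
  refine ⟨fun i => (A'.filter fun s => s.fst = i).image f', ?_, ?_, ?_, ?_, ?_⟩
  · intro i j hj
    rw [Finset.mem_image] at hj
    obtain ⟨s, hs, rfl⟩ := hj
    rw [Finset.mem_filter] at hs
    have := hrel' s hs.1
    rw [hrel] at this
    rwa [hs.2] at this
  · intro i
    calc ((A'.filter fun s => s.fst = i).image f').card
        ≤ (A'.filter fun s => s.fst = i).card := Finset.card_image_le
      _ ≤ (univ.filter fun s : (i : Fin n) × Fin (c i) => s.fst = i).card :=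
          Finset.card_le_card (Finset.filter_subset_filter _ (Finset.subset_univ _))
      _ = c i := by
          have : (univ.filter fun s : (i : Fin n) × Fin (c i) => s.fst = i)
              = ({i} : Finset (Fin n)).sigma fun _ => univ := by
            ext ⟨i', k⟩
            simp [Finset.mem_sigma]
          rw [this, Finset.card_sigma]
          simp
  · intro i hBi
    have hEq : A'.filter (fun s => s.fst = i)
        = univ.filter fun s : (i : Fin n) × Fin (c i) => s.fst = i := by
      apply Finset.Subset.antisymm
      · exact Finset.filter_subset_filter _ (Finset.subset_univ _)
      · intro s hs
        rw [Finset.mem_filter] at hs ⊢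
        refine ⟨hAA' ?_, hs.2⟩
        rw [hA, Finset.mem_filter]
        exact ⟨Finset.mem_univ _, hs.2 ▸ hBi⟩
    rw [Finset.card_image_of_injOn (hinj'.mono ?_), hEq]
    · have : (univ.filter fun s : (i : Fin n) × Fin (c i) => s.fst = i)
          = ({i} : Finset (Fin n)).sigma fun _ => univ := by
        ext ⟨i', k⟩
        simp [Finset.mem_sigma]
      rw [this, Finset.card_sigma]
      simp
    · intro s hs
      rw [Finset.mem_coe, Finset.mem_filter] at hs
      exact hs.1
  · intro i k hik
    rw [Finset.disjoint_left]
    intro j hji hjk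
    rw [Finset.mem_image] at hji hjk
    obtain ⟨s, hs, rfl⟩ := hji
    obtain ⟨s', hs', heq⟩ := hjk
    rw [Finset.mem_filter] at hs hs'
    have : s' = s := hinj' hs'.1 hs.1 heq
    apply hik
    rw [← hs.2, ← hs'.2, this]
  · intro j hj
    have := hcov' hj
    rw [Finset.mem_image] at this
    obtain ⟨s, hs, rfl⟩ := this
    exact ⟨s.fst, Finset.mem_image.2 ⟨s, Finset.mem_filter.2 ⟨hs, rfl⟩, rfl⟩⟩

end CapWalras



open Finset CapWalras

theorem capacitated_walrasian_exists' {G : Type*} [Fintype G] [DecidableEq G]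
    (n : ℕ) (w : Fin n → G → ℝ) (hw : ∀ i j, 0 ≤ w i j) (c : Fin n → ℕ) :
    ∃ (p : G → ℝ) (a : Fin n → Finset G),
      (∀ j, 0 ≤ p j) ∧
      (∀ i k, i ≠ k → Disjoint (a i) (a k)) ∧
      (∀ i, ∀ S : Finset G,
        capVal' (w i) (c i) S - ∑ j ∈ S, p j ≤
          capVal' (w i) (c i) (a i) - ∑ j ∈ a i, p j) ∧
      (∀ j, (∀ i, j ∉ a i) → p j = 0) := by
  classical
  rcases isEmpty_or_nonempty G with hGe | hGne
  · refine ⟨fun _ => 0, fun _ => ∅, fun j => le_rfl, fun i k _ => by simp, ?_, fun j _ => rfl⟩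
    intro i S
    have hS : S = ∅ := Finset.eq_empty_of_isEmpty S
    subst hS
    simp
  have hGuniv : (univ : Finset G).Nonempty := univ_nonempty
  -- the bounding box
  set M : ℝ := 1 + ∑ i, ∑ j, w i j with hMdef
  have hM1 : 0 ≤ M - 1 := by
    have := Finset.sum_nonneg (fun i (_ : i ∈ (univ : Finset (Fin n))) =>
      Finset.sum_nonneg fun j (_ : j ∈ (univ : Finset G)) => hw i j)
    simp only [hMdef]
    linarith
  have hwM : ∀ i j, w i j ≤ M - 1 := by
    intro i j
    have h1 : w i j ≤ ∑ j', w i j' :=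
      Finset.single_le_sum (fun j' _ => hw i j') (Finset.mem_univ j)
    have h2 : ∑ j', w i j' ≤ ∑ i', ∑ j', w i' j' :=
      Finset.single_le_sum (fun i' (_ : i' ∈ (univ : Finset (Fin n))) =>
        Finset.sum_nonneg fun j' _ => hw i' j') (Finset.mem_univ i)
    simp only [hMdef]
    linarith
  set K : Set (G → ℝ) := Set.Icc 0 (fun _ => M) with hKdef
  have hKmem : ∀ q : G → ℝ, (∀ j, 0 ≤ q j ∧ q j ≤ M) → q ∈ K := by
    intro q hq
    rw [hKdef, Set.mem_Icc]
    exact ⟨fun j => (hq j).1, fun j => (hq j).2⟩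
  have hKc : IsCompact K := isCompact_Icc
  have hKne : K.Nonempty := by
    refine ⟨0, hKmem 0 fun j => ⟨le_rfl, ?_⟩⟩
    have : (0 : G → ℝ) j = 0 := rfl
    rw [this]
    linarith
  set Lf : (G → ℝ) → ℝ := fun q => (∑ i, us (w i) (c i) q) + ∑ j, q j with hLf
  have hLc : Continuous Lf := by
    apply Continuous.add
    · exact continuous_finset_sum _ fun i _ => continuous_us (w i) (c i)
    · exact continuous_finset_sum _ fun j _ => continuous_apply j
  obtain ⟨p₀, hp₀K, hp₀min⟩ := hKc.exists_isMinOn hKne hLc.continuousOn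
  set S₀ : Set (G → ℝ) := K ∩ {q | Lf q = Lf p₀} with hS₀def
  have hS₀c : IsCompact S₀ := hKc.inter_right (isClosed_eq hLc continuous_const)
  have hS₀ne : S₀.Nonempty := ⟨p₀, hp₀K, rfl⟩
  obtain ⟨p, hpS₀, hpmax⟩ := hS₀c.exists_isMaxOn hS₀ne
    (continuous_finset_sum univ fun j (_ : j ∈ univ) => continuous_apply j).continuousOn
  have hpK : p ∈ K := hpS₀.1
  have hpL : Lf p = Lf p₀ := hpS₀.2
  have hplow : ∀ j, 0 ≤ p j := fun j => hpK.1 j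
  have hpup : ∀ j, p j ≤ M := fun j => hpK.2 j
  have hpmin : ∀ q ∈ K, Lf p ≤ Lf q := by
    intro q hq
    rw [hpL]
    exact hp₀min hq
  have hpstrict : ∀ q ∈ K, (∑ j, p j) < (∑ j, q j) → Lf p < Lf q := by
    intro q hq hsum
    rcases lt_or_eq_of_le (hpmin q hq) with h | h
    · exact h
    · exfalso
      have hqS₀ : q ∈ S₀ := by
        refine ⟨hq, ?_⟩
        show Lf q = Lf p₀
        rw [← h]
        exact hpL
      have := hpmax hqS₀
      simp only [Set.mem_setOf_eq] at this
      exact absurd hsum (not_lt.2 this)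
  -- margins and maximal margin
  set θ : Fin n → ℝ := fun i => univ.sup' hGuniv (fun j => w i j - p j) with hθdef
  have hθub : ∀ i j, w i j - p j ≤ θ i := by
    intro i j
    simp only [hθdef]
    exact Finset.le_sup' (fun j' => w i j' - p j') (Finset.mem_univ j)
  have hθex : ∀ i, ∃ j, w i j - p j = θ i := by
    intro i
    simp only [hθdef]
    obtain ⟨j, _, hj⟩ := Finset.exists_mem_eq_sup' hGuniv (fun j' => w i j' - p j')
    exact ⟨j, hj.symm⟩
  have husub : ∀ i (T : Finset G), T.card ≤ c i →
      ∑ x ∈ T, (w i x - p x) ≤ us (w i) (c i) p := fun i T hT => le_us hT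
  have hmono : ∀ i (q : G → ℝ), (∀ x, p x ≤ q x) →
      us (w i) (c i) q ≤ us (w i) (c i) p := by
    intro i q hq
    apply us_le
    intro T hT
    refine le_trans (Finset.sum_le_sum fun x _ => ?_) (le_us hT)
    have := hq x
    linarith
  -- no good is demanded by force
  have hnf : ∀ i (j : G), ∃ T : Finset G, T.card ≤ c i ∧
      ∑ x ∈ T, (w i x - p x) = us (w i) (c i) p ∧ j ∉ T := by
    intro i j
    by_contra hcon
    push_neg at hcon
    obtain ⟨T₀, hT₀mem, hT₀val⟩ :=
      Finset.exists_mem_eq_sup' (Tsp_ne (G := G) (c i)) (fun T => ∑ x ∈ T, (w i x - p x))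
    have hT₀card : T₀.card ≤ c i := mem_Tsp.1 hT₀mem
    have hT₀val' : us (w i) (c i) p = ∑ x ∈ T₀, (w i x - p x) := hT₀val
    have hjT₀ : j ∈ T₀ := hcon T₀ hT₀card hT₀val'.symm
    -- the margin of j must be positive
    have hjm : 0 < w i j - p j := by
      by_contra hm0
      push_neg at hm0
      have hjcard : (T₀.erase j).card ≤ c i := le_trans (Finset.card_erase_le) hT₀card
      have h0 : (w i j - p j) + ∑ x ∈ T₀.erase j, (w i x - p x)
          = ∑ x ∈ T₀, (w i x - p x) :=
        Finset.add_sum_erase T₀ (fun x => w i x - p x) hjT₀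
      have hge : us (w i) (c i) p ≤ ∑ x ∈ T₀.erase j, (w i x - p x) := by
        rw [hT₀val']
        linarith
      have heq : ∑ x ∈ T₀.erase j, (w i x - p x) = us (w i) (c i) p :=
        le_antisymm (husub i _ hjcard) hge
      exact Finset.notMem_erase j T₀ (hcon _ hjcard heq)
    -- the best value avoiding j
    set Tav : Finset (Finset G) := (Tsp G (c i)).filter (fun T => j ∉ T) with hTav
    have hTavne : Tav.Nonempty := ⟨∅, by simp [hTav, Tsp]⟩
    set s₂ : ℝ := Tav.sup' hTavne (fun T => ∑ x ∈ T, (w i x - p x)) with hs₂def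
    have hs₂lt : s₂ < us (w i) (c i) p := by
      obtain ⟨T₂, hT₂mem, hT₂val⟩ :=
        Finset.exists_mem_eq_sup' hTavne (fun T => ∑ x ∈ T, (w i x - p x))
      rw [hTav, Finset.mem_filter] at hT₂mem
      have hT₂card : T₂.card ≤ c i := mem_Tsp.1 hT₂mem.1
      have hT₂val' : s₂ = ∑ x ∈ T₂, (w i x - p x) := hT₂val
      have h' : s₂ ≤ us (w i) (c i) p := by
        rw [hT₂val']
        exact husub i T₂ hT₂card
      rcases lt_or_eq_of_le h' with h | h
      · exact h
      · exfalso
        refine hT₂mem.2 (hcon T₂ hT₂card ?_)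
        rw [← hT₂val']
        exact h
    set ε : ℝ := min 1 (us (w i) (c i) p - s₂) with hε
    have hεpos : 0 < ε := lt_min one_pos (by linarith)
    have hε1 : ε ≤ 1 := min_le_left _ _
    have hε2 : ε ≤ us (w i) (c i) p - s₂ := min_le_right _ _
    set q : G → ℝ := Function.update p j (p j + ε) with hq
    have hqval : ∀ x, q x = p x + (if x = j then ε else 0) := by
      intro x
      rcases eq_or_ne x j with rfl | hx
      · rw [hq, Function.update_self, if_pos rfl]
      · rw [hq, Function.update_of_ne hx, if_neg hx]
        ring
    have hqK : q ∈ K := by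
      apply hKmem
      intro x
      rw [hqval x]
      rcases eq_or_ne x j with rfl | hx
      · rw [if_pos rfl]
        constructor
        · have := hplow x; linarith
        · have := hwM i x; linarith
      · rw [if_neg hx]
        constructor
        · have := hplow x; linarith
        · have := hpup x; linarith
    have hqsum : ∑ x, p x < ∑ x, q x := by
      have : ∑ x, q x = ∑ x, p x + ε := by
        rw [Finset.sum_congr rfl fun x _ => hqval x, Finset.sum_add_distrib,
          Finset.sum_ite_eq' univ j (fun _ => ε), if_pos (Finset.mem_univ j)]
      rw [this]
      linarith
    have hLlt := hpstrict q hqK hqsum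
    -- but the utility of agent i drops by at least ε
    have hui : us (w i) (c i) q ≤ us (w i) (c i) p - ε := by
      apply us_le
      intro T hT
      have hsum : ∑ x ∈ T, (w i x - q x)
          = ∑ x ∈ T, (w i x - p x) - (if j ∈ T then ε else 0) := by
        have h1 : ∀ x ∈ T, w i x - q x = (w i x - p x) - (if x = j then ε else 0) := by
          intro x _
          rw [hqval x]
          ring
        rw [Finset.sum_congr rfl h1, Finset.sum_sub_distrib,
          Finset.sum_ite_eq' T j (fun _ => ε)]
      by_cases hjT : j ∈ T
      · rw [hsum, if_pos hjT]
        have := husub i T hT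
        linarith
      · rw [hsum, if_neg hjT, sub_zero]
        have hTmem : T ∈ Tav := by
          rw [hTav, Finset.mem_filter]
          exact ⟨mem_Tsp.2 hT, hjT⟩
        have : ∑ x ∈ T, (w i x - p x) ≤ s₂ := by
          rw [hs₂def]
          exact Finset.le_sup' (fun T => ∑ x ∈ T, (w i x - p x)) hTmem
        linarith
    have hothers : ∀ k, us (w k) (c k) q ≤ us (w k) (c k) p := by
      intro k
      apply hmono
      intro x
      rw [hqval x]
      split_ifs
      · linarith
      · linarith
    have hLle : Lf q ≤ Lf p := by
      rw [hLf]
      simp only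
      have h1 : ∑ k, us (w k) (c k) q ≤ (∑ k, us (w k) (c k) p) - ε := by
        have e1 := Finset.add_sum_erase univ (fun k => us (w k) (c k) q) (Finset.mem_univ i)
        have e2 := Finset.add_sum_erase univ (fun k => us (w k) (c k) p) (Finset.mem_univ i)
        have e3 : ∑ k ∈ univ.erase i, us (w k) (c k) q
            ≤ ∑ k ∈ univ.erase i, us (w k) (c k) p :=
          Finset.sum_le_sum fun k _ => hothers k
        linarith
      have h2 : ∑ x, q x = ∑ x, p x + ε := by
        rw [Finset.sum_congr rfl fun x _ => hqval x, Finset.sum_add_distrib,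
          Finset.sum_ite_eq' univ j (fun _ => ε), if_pos (Finset.mem_univ j)]
      linarith
    exact absurd hLle (not_le.2 hLlt)
  
  -- agent types
  set Tθ : Fin n → Finset G := fun i => univ.filter fun j => w i j - p j = θ i with hTθdef
  set Zi : Fin n → Finset G := fun i => univ.filter fun j => w i j - p j = 0 with hZidef
  set pool : Fin n → Finset G := fun i => if 0 < θ i then Tθ i else Zi i with hpooldef
  have hstrB : ∀ i, 0 < θ i →
      c i ≤ (Tθ i).card ∧ us (w i) (c i) p = (c i : ℝ) * θ i := by
    intro i hθi
    have H := structure_lemma (c := c i) (m := fun j => w i j - p j) (θ := θ i)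
      (s := us (w i) (c i) p) (hθex i) (hθub i) hθi
      (fun T hT => husub i T hT)
      (fun j => by
        obtain ⟨T, h1, h2, h3⟩ := hnf i j
        exact ⟨T, h1, le_of_eq h2.symm, h3⟩)
    simp only [hTθdef]
    exact ⟨H.1, H.2⟩
  have husA : ∀ i, ¬ 0 < θ i → us (w i) (c i) p = 0 := by
    intro i hθi
    push_neg at hθi
    apply le_antisymm
    · apply us_le
      intro T hT
      apply Finset.sum_nonpos
      intro x _
      have := hθub i x
      linarith
    · exact us_nonneg _ _ _
  -- upward perturbation : the tie-pools of B-agents are large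
  have hF3 : ∀ I : Finset (Fin n), I.Nonempty → (∀ i ∈ I, 0 < θ i) →
      ∑ i ∈ I, c i < (I.biUnion Tθ).card := by
    intro I hIne hIB
    set J : Finset G := I.biUnion Tθ with hJdef
    have hJne : J.Nonempty := by
      obtain ⟨i₀, hi₀⟩ := hIne
      obtain ⟨j₀, hj₀⟩ := hθex i₀
      refine ⟨j₀, ?_⟩
      rw [hJdef]
      refine Finset.mem_biUnion.2 ⟨i₀, hi₀, ?_⟩
      simp only [hTθdef, Finset.mem_filter]
      exact ⟨Finset.mem_univ _, hj₀⟩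
    set E : Finset ℝ := insert 1 ((I.image θ) ∪
      (((I ×ˢ (univ : Finset G)).filter fun x => w x.1 x.2 - p x.2 ≠ θ x.1).image
        fun x => θ x.1 - (w x.1 x.2 - p x.2))) with hEdef
    have hEne : (1 : ℝ) ∈ E := by rw [hEdef]; exact Finset.mem_insert_self _ _
    set ε : ℝ := E.min' ⟨1, hEne⟩ with hεdef
    have hεpos : 0 < ε := by
      rw [hεdef]; refine (Finset.lt_min'_iff _ _).2 ?_
      intro y hy
      rw [hEdef] at hy
      rcases Finset.mem_insert.1 hy with rfl | hy
      · exact one_pos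
      rcases Finset.mem_union.1 hy with hy | hy
      · obtain ⟨i, hi, rfl⟩ := Finset.mem_image.1 hy
        exact hIB i hi
      · obtain ⟨x, hx, rfl⟩ := Finset.mem_image.1 hy
        rw [Finset.mem_filter] at hx
        have h1 := hθub x.1 x.2
        exact sub_pos.2 (lt_of_le_of_ne h1 hx.2)
    have hε1 : ε ≤ 1 := Finset.min'_le _ _ hEne
    have hεθ : ∀ i ∈ I, ε ≤ θ i := by
      intro i hi
      apply Finset.min'_le
      rw [hEdef]
      exact Finset.mem_insert_of_mem (Finset.mem_union_left _ (Finset.mem_image_of_mem θ hi))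
    have hεgap : ∀ i ∈ I, ∀ j, w i j - p j ≠ θ i → ε ≤ θ i - (w i j - p j) := by
      intro i hi j hne
      apply Finset.min'_le
      rw [hEdef]
      refine Finset.mem_insert_of_mem (Finset.mem_union_right _
        (Finset.mem_image.2 ⟨(i, j), ?_, rfl⟩))
      rw [Finset.mem_filter]
      exact ⟨Finset.mem_product.2 ⟨hi, Finset.mem_univ _⟩, hne⟩
    set q : G → ℝ := fun x => if x ∈ J then p x + ε else p x with hqdef
    have hqval : ∀ x, q x = p x + (if x ∈ J then ε else 0) := by
      intro x
      simp only [hqdef]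
      split_ifs <;> ring
    have hqge : ∀ x, p x ≤ q x := by
      intro x
      rw [hqval x]
      split_ifs <;> linarith
    have hqK : q ∈ K := by
      apply hKmem
      intro x
      constructor
      · have h1 := hplow x
        have h2 := hqge x
        linarith
      · simp only [hqdef]
        split_ifs with hx
        · rw [hJdef] at hx
          obtain ⟨i, hiI, hxT⟩ := Finset.mem_biUnion.1 hx
          simp only [hTθdef, Finset.mem_filter] at hxT
          have h1 : w i x - p x = θ i := hxT.2
          have h2 := hIB i hiI
          have h3 := hwM i x
          linarith
        · exact hpup x
    have hite : ∑ x ∈ univ, (if x ∈ J then ε else (0:ℝ)) = ε * J.card := by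
      rw [Finset.sum_ite_mem, Finset.univ_inter, Finset.sum_const, nsmul_eq_mul, mul_comm]
    have hqsum : ∑ x, q x = ∑ x, p x + ε * J.card := by
      rw [Finset.sum_congr rfl fun x _ => hqval x, Finset.sum_add_distrib, hite]
    have hJc : (0:ℝ) < ε * J.card := by
      apply mul_pos hεpos
      exact_mod_cast Finset.card_pos.2 hJne
    have hLlt : Lf p < Lf q := hpstrict q hqK (by rw [hqsum]; linarith)
    have hiIb : ∀ i ∈ I, us (w i) (c i) q ≤ us (w i) (c i) p - ε * c i := by
      intro i hi
      have hval := (hstrB i (hIB i hi)).2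
      have hθε : 0 ≤ θ i - ε := by
        have := hεθ i hi
        linarith
      have key : us (w i) (c i) q ≤ (c i : ℝ) * (θ i - ε) := by
        apply us_le
        intro T hT
        have hbound : ∀ x ∈ T, w i x - q x ≤ (θ i - ε) + (if x ∈ (∅ : Finset G) then ε else 0) := by
          intro x _
          rw [if_neg (Finset.notMem_empty x), hqval x]
          by_cases hx : x ∈ J
          · rw [if_pos hx]
            have := hθub i x
            linarith
          · rw [if_neg hx]
            have hxT : x ∉ Tθ i := by
              intro hc
              apply hx
              rw [hJdef]
              exact Finset.mem_biUnion.2 ⟨i, hi, hc⟩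
            have hne : w i x - p x ≠ θ i := by
              intro hc
              apply hxT
              simp only [hTθdef, Finset.mem_filter]
              exact ⟨Finset.mem_univ _, hc⟩
            have := hεgap i hi x hne
            linarith
        have := sum_bound hT hθε hεpos.le hbound
        simpa using this
      rw [hval]
      calc us (w i) (c i) q ≤ (c i : ℝ) * (θ i - ε) := key
        _ = (c i : ℝ) * θ i - ε * c i := by ring
    have hsum1 : ∑ k, us (w k) (c k) q
        ≤ (∑ k, us (w k) (c k) p) - ε * ∑ i ∈ I, (c i : ℝ) := by
      have hper : ∀ k ∈ (univ : Finset (Fin n)),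
          us (w k) (c k) q ≤ us (w k) (c k) p - (if k ∈ I then ε * c k else 0) := by
        intro k _
        split_ifs with hk
        · exact hiIb k hk
        · have := hmono k q hqge
          linarith
      calc ∑ k, us (w k) (c k) q
          ≤ ∑ k, (us (w k) (c k) p - (if k ∈ I then ε * c k else 0)) :=
            Finset.sum_le_sum hper
        _ = (∑ k, us (w k) (c k) p) - ∑ k, (if k ∈ I then ε * c k else 0) :=
            Finset.sum_sub_distrib _ _
        _ = (∑ k, us (w k) (c k) p) - ε * ∑ i ∈ I, (c i : ℝ) := by
            rw [Finset.sum_ite_mem, Finset.univ_inter, Finset.mul_sum]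
    by_contra hle
    push_neg at hle
    have hcast : (J.card : ℝ) ≤ ∑ i ∈ I, (c i : ℝ) := by
      rw [hJdef]
      push_cast
      exact_mod_cast hle
    have hmul : ε * (J.card : ℝ) ≤ ε * ∑ i ∈ I, (c i : ℝ) :=
      mul_le_mul_of_nonneg_left hcast hεpos.le
    have hLfp : Lf p = (∑ k, us (w k) (c k) p) + ∑ x, p x := rfl
    have hLfq : Lf q = (∑ k, us (w k) (c k) q) + ∑ x, q x := rfl
    rw [hLfp, hLfq, hqsum] at hLlt
    linarith
  -- downward perturbation : positively priced goods are demanded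
  have hF4 : ∀ J : Finset G, (∀ j ∈ J, 0 < p j) →
      J.card ≤ ∑ i, min (c i) ((pool i ∩ J).card) := by
    intro J hJpos
    rcases J.eq_empty_or_nonempty with rfl | hJne
    · simp
    set E : Finset ℝ := insert 1 ((J.image p) ∪
      (((univ : Finset (Fin n)) ×ˢ (univ : Finset G)).filter
          (fun x => if 0 < θ x.1 then w x.1 x.2 - p x.2 ≠ θ x.1 else w x.1 x.2 - p x.2 ≠ 0)).image
        fun x => if 0 < θ x.1 then θ x.1 - (w x.1 x.2 - p x.2) else -(w x.1 x.2 - p x.2)) with hEdef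
    have hEne : (1 : ℝ) ∈ E := by rw [hEdef]; exact Finset.mem_insert_self _ _
    set ε : ℝ := E.min' ⟨1, hEne⟩ with hεdef
    have hεpos : 0 < ε := by
      rw [hεdef]; refine (Finset.lt_min'_iff _ _).2 ?_
      intro y hy
      rw [hEdef] at hy
      rcases Finset.mem_insert.1 hy with rfl | hy
      · exact one_pos
      rcases Finset.mem_union.1 hy with hy | hy
      · obtain ⟨j, hj, rfl⟩ := Finset.mem_image.1 hy
        exact hJpos j hj
      · obtain ⟨x, hx, rfl⟩ := Finset.mem_image.1 hy
        rw [Finset.mem_filter] at hx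
        by_cases hB : 0 < θ x.1
        · rw [if_pos hB]
          rw [if_pos hB] at hx
          exact sub_pos.2 (lt_of_le_of_ne (hθub x.1 x.2) hx.2)
        · rw [if_neg hB]
          rw [if_neg hB] at hx
          have h1 := hθub x.1 x.2
          have h2 : θ x.1 ≤ 0 := le_of_not_gt hB
          have h3 : w x.1 x.2 - p x.2 < 0 := lt_of_le_of_ne (le_trans h1 h2) hx.2
          linarith
    have hεp : ∀ j ∈ J, ε ≤ p j := by
      intro j hj
      apply Finset.min'_le
      rw [hEdef]
      exact Finset.mem_insert_of_mem (Finset.mem_union_left _ (Finset.mem_image_of_mem p hj))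
    have hεB : ∀ i, 0 < θ i → ∀ j, w i j - p j ≠ θ i → ε ≤ θ i - (w i j - p j) := by
      intro i hB j hne
      apply Finset.min'_le
      rw [hEdef]
      refine Finset.mem_insert_of_mem (Finset.mem_union_right _ (Finset.mem_image.2 ⟨(i, j), ?_, ?_⟩))
      · rw [Finset.mem_filter, if_pos hB]
        exact ⟨Finset.mem_product.2 ⟨Finset.mem_univ _, Finset.mem_univ _⟩, hne⟩
      · rw [if_pos hB]
    have hεA : ∀ i, ¬ 0 < θ i → ∀ j, w i j - p j ≠ 0 → ε ≤ -(w i j - p j) := by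
      intro i hB j hne
      apply Finset.min'_le
      rw [hEdef]
      refine Finset.mem_insert_of_mem (Finset.mem_union_right _ (Finset.mem_image.2 ⟨(i, j), ?_, ?_⟩))
      · rw [Finset.mem_filter, if_neg hB]
        exact ⟨Finset.mem_product.2 ⟨Finset.mem_univ _, Finset.mem_univ _⟩, hne⟩
      · rw [if_neg hB]
    set q : G → ℝ := fun x => if x ∈ J then p x - ε else p x with hqdef
    have hqval : ∀ x, q x = p x - (if x ∈ J then ε else 0) := by
      intro x
      simp only [hqdef]
      split_ifs <;> ring
    have hqK : q ∈ K := by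
      apply hKmem
      intro x
      simp only [hqdef]
      split_ifs with hx
      · constructor
        · have := hεp x hx
          linarith
        · have := hpup x
          have := hεpos
          linarith
      · exact ⟨hplow x, hpup x⟩
    have hite : ∑ x ∈ univ, (if x ∈ J then ε else (0:ℝ)) = ε * J.card := by
      rw [Finset.sum_ite_mem, Finset.univ_inter, Finset.sum_const, nsmul_eq_mul, mul_comm]
    have hqsum : ∑ x, q x = ∑ x, p x - ε * J.card := by
      rw [Finset.sum_congr rfl fun x _ => hqval x, Finset.sum_sub_distrib, hite]
    have hLge : Lf p ≤ Lf q := hpmin q hqK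
    have hper : ∀ i, us (w i) (c i) q
        ≤ us (w i) (c i) p + ε * (min (c i) ((pool i ∩ J).card) : ℕ) := by
      intro i
      by_cases hB : 0 < θ i
      · have hpool : pool i = Tθ i := by simp only [hpooldef]; exact if_pos hB
        have hval := (hstrB i hB).2
        have key : us (w i) (c i) q
            ≤ (c i : ℝ) * θ i + ε * (min (c i) ((Tθ i ∩ J).card) : ℕ) := by
          apply us_le
          intro T hT
          have hbound : ∀ x ∈ T, w i x - q x ≤ θ i + (if x ∈ Tθ i ∩ J then ε else 0) := by
            intro x _
            rw [hqval x]
            by_cases hxT : x ∈ Tθ i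
            · have hxθ : w i x - p x = θ i := by
                have := hxT
                simp only [hTθdef, Finset.mem_filter] at this
                exact this.2
              by_cases hxJ : x ∈ J
              · rw [if_pos hxJ, if_pos (Finset.mem_inter.2 ⟨hxT, hxJ⟩)]
                linarith
              · rw [if_neg hxJ, if_neg (fun hc => hxJ (Finset.mem_inter.1 hc).2)]
                linarith
            · have hne : w i x - p x ≠ θ i := by
                intro hc
                apply hxT
                simp only [hTθdef, Finset.mem_filter]
                exact ⟨Finset.mem_univ _, hc⟩
              have h1 := hεB i hB x hne
              have h2 : (if x ∈ J then ε else 0) ≤ ε := by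
                split_ifs <;> linarith
              rw [if_neg (fun hc => hxT (Finset.mem_inter.1 hc).1)]
              linarith
          exact sum_bound hT hB.le hεpos.le hbound
        rw [hpool, hval]
        exact key
      · have hpool : pool i = Zi i := by simp only [hpooldef]; exact if_neg hB
        have hval := husA i hB
        have key : us (w i) (c i) q
            ≤ (c i : ℝ) * 0 + ε * (min (c i) ((Zi i ∩ J).card) : ℕ) := by
          apply us_le
          intro T hT
          have hbound : ∀ x ∈ T, w i x - q x ≤ 0 + (if x ∈ Zi i ∩ J then ε else 0) := by
            intro x _
            rw [hqval x]
            by_cases hxZ : x ∈ Zi i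
            · have hx0 : w i x - p x = 0 := by
                have := hxZ
                simp only [hZidef, Finset.mem_filter] at this
                exact this.2
              by_cases hxJ : x ∈ J
              · rw [if_pos hxJ, if_pos (Finset.mem_inter.2 ⟨hxZ, hxJ⟩)]
                linarith
              · rw [if_neg hxJ, if_neg (fun hc => hxJ (Finset.mem_inter.1 hc).2)]
                linarith
            · have hne : w i x - p x ≠ 0 := by
                intro hc
                apply hxZ
                simp only [hZidef, Finset.mem_filter]
                exact ⟨Finset.mem_univ _, hc⟩
              have h1 := hεA i hB x hne
              have h2 : (if x ∈ J then ε else 0) ≤ ε := by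
                split_ifs <;> linarith
              rw [if_neg (fun hc => hxZ (Finset.mem_inter.1 hc).1)]
              linarith
          exact sum_bound hT le_rfl hεpos.le hbound
        rw [hpool, hval]
        calc us (w i) (c i) q ≤ (c i : ℝ) * 0 + ε * (min (c i) ((Zi i ∩ J).card) : ℕ) := key
          _ = 0 + ε * (min (c i) ((Zi i ∩ J).card) : ℕ) := by ring
    have hsum1 : ∑ k, us (w k) (c k) q
        ≤ (∑ k, us (w k) (c k) p) + ε * ∑ i, ((min (c i) ((pool i ∩ J).card) : ℕ) : ℝ) := by
      calc ∑ k, us (w k) (c k) q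
          ≤ ∑ k, (us (w k) (c k) p + ε * (min (c k) ((pool k ∩ J).card) : ℕ)) :=
            Finset.sum_le_sum fun k _ => hper k
        _ = (∑ k, us (w k) (c k) p) + ε * ∑ i, ((min (c i) ((pool i ∩ J).card) : ℕ) : ℝ) := by
            rw [Finset.sum_add_distrib, Finset.mul_sum]
    by_contra hle
    push_neg at hle
    have hcast : (∑ i, ((min (c i) ((pool i ∩ J).card) : ℕ) : ℝ)) < (J.card : ℝ) := by
      exact_mod_cast hle
    have hmul : ε * (∑ i, ((min (c i) ((pool i ∩ J).card) : ℕ) : ℝ)) ≤ ε * (J.card : ℝ) :=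
      mul_le_mul_of_nonneg_left hcast.le hεpos.le
    have hLfp : Lf p = (∑ k, us (w k) (c k) p) + ∑ x, p x := rfl
    have hLfq : Lf q = (∑ k, us (w k) (c k) q) + ∑ x, q x := rfl
    rw [hLfp, hLfq, hqsum] at hLge
    have hJclt : (0:ℝ) < ε * J.card - ε * (∑ i, ((min (c i) ((pool i ∩ J).card) : ℕ) : ℝ)) := by
      have : ε * (∑ i, ((min (c i) ((pool i ∩ J).card) : ℕ) : ℝ)) < ε * (J.card : ℝ) :=
        mul_lt_mul_of_pos_left hcast hεpos
      linarith
    linarith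
  -- the set of positively priced goods
  set Pos : Finset G := univ.filter (fun j => 0 < p j) with hPosdef
  have hbound : ∀ i S, capVal' (w i) (c i) S - ∑ j ∈ S, p j ≤ us (w i) (c i) p :=
    fun i S => capVal'_sub_le hplow S
  rcases isEmpty_or_nonempty ((i : Fin n) × Fin (c i)) with hSe | hSne
  · -- all capacities are zero
    have hc0 : ∀ i, c i = 0 := by
      intro i
      by_contra hc
      exact hSe.false ⟨i, ⟨0, Nat.pos_of_ne_zero hc⟩⟩
    have hp0 : ∀ j, p j = 0 := by
      intro j
      by_contra hpj
      have hj : 0 < p j := lt_of_le_of_ne (hplow j) (Ne.symm hpj)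
      have := hF4 {j} (by
        intro x hx
        rw [Finset.mem_singleton] at hx
        subst hx
        exact hj)
      simp [hc0] at this
    refine ⟨p, fun _ => ∅, hplow, fun i k _ => by simp, ?_, fun j _ => hp0 j⟩
    intro i S
    have h1 := hbound i S
    have h2 : capVal' (w i) (c i) ∅ = 0 := by
      rw [capVal'_eq_sum (hw i) (by simp)]
      simp
    have h3 : us (w i) (c i) p = 0 := by
      by_cases hB : 0 < θ i
      · have := (hstrB i hB).2
        rw [this, hc0 i]
        simp
      · exact husA i hB
    rw [h2]
    simp only [Finset.sum_empty]
    linarith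
  · -- the interesting case
    have hfill : ∀ I : Finset (Fin n), I.Nonempty → (∀ i ∈ I, 0 < θ i) →
        ∑ i ∈ I, c i ≤ (I.biUnion pool).card := by
      intro I hIne hIB
      have : I.biUnion pool = I.biUnion Tθ := by
        apply Finset.biUnion_congr rfl
        intro i hi
        simp only [hpooldef]
        exact if_pos (hIB i hi)
      rw [this]
      exact le_of_lt (hF3 I hIne hIB)
    have hcover : ∀ J : Finset G, J ⊆ Pos →
        J.card ≤ ∑ i, min (c i) ((pool i ∩ J).card) := by
      intro J hJ
      apply hF4
      intro j hj
      have := hJ hj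
      simp only [hPosdef, Finset.mem_filter] at this
      exact this.2
    obtain ⟨X, hX1, hX2, hX3, hX4, hX5⟩ :=
      assemble c pool (fun i => 0 < θ i) Pos hGne hSne hfill hcover
    refine ⟨p, X, hplow, hX4, ?_, ?_⟩
    · intro i S
      have h1 := hbound i S
      have hXsub := hX1 i
      by_cases hB : 0 < θ i
      · have hpool : pool i = Tθ i := by simp only [hpooldef]; exact if_pos hB
        have hXcard : (X i).card = c i := hX3 i hB
        have hXT : X i ⊆ Tθ i := hpool ▸ hXsub
        have hcap : capVal' (w i) (c i) (X i) = ∑ x ∈ X i, w i x :=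
          capVal'_eq_sum (hw i) (le_of_eq hXcard)
        have hsum : ∑ x ∈ X i, (w i x - p x) = (c i : ℝ) * θ i := by
          have he : ∀ x ∈ X i, w i x - p x = θ i := by
            intro x hx
            have := hXT hx
            simp only [hTθdef, Finset.mem_filter] at this
            exact this.2
          rw [Finset.sum_congr rfl he, Finset.sum_const, hXcard, nsmul_eq_mul]
        have hsub : ∑ x ∈ X i, (w i x - p x) = (∑ x ∈ X i, w i x) - ∑ x ∈ X i, p x :=
          Finset.sum_sub_distrib _ _
        have hus := (hstrB i hB).2
        rw [hcap]
        linarith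
      · have hpool : pool i = Zi i := by simp only [hpooldef]; exact if_neg hB
        have hXZ : X i ⊆ Zi i := hpool ▸ hXsub
        have hcap : capVal' (w i) (c i) (X i) = ∑ x ∈ X i, w i x :=
          capVal'_eq_sum (hw i) (hX2 i)
        have hsum : ∑ x ∈ X i, (w i x - p x) = 0 := by
          have he : ∀ x ∈ X i, w i x - p x = 0 := by
            intro x hx
            have := hXZ hx
            simp only [hZidef, Finset.mem_filter] at this
            exact this.2
          rw [Finset.sum_congr rfl he]
          simp
        have hsub : ∑ x ∈ X i, (w i x - p x) = (∑ x ∈ X i, w i x) - ∑ x ∈ X i, p x :=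
          Finset.sum_sub_distrib _ _
        have hus := husA i hB
        rw [hcap]
        linarith
    · intro j hj
      by_contra hpj
      have hjP : j ∈ Pos := by
        simp only [hPosdef, Finset.mem_filter]
        exact ⟨Finset.mem_univ _, lt_of_le_of_ne (hplow j) (Ne.symm hpj)⟩
      obtain ⟨i, hi⟩ := hX5 j hjP
      exact hj i hi


/-- Every allocation problem with capacitated valuations admits a Walrasian
equilibrium: nonnegative item prices and disjoint bundles such that each agent's
bundle maximizes her quasi-linear utility, and unallocated goods have price 0. -/
theorem capacitated_walrasian_exists {G : Type*} [Fintype G] [DecidableEq G]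
    (n : ℕ) (w : Fin n → G → ℝ) (hw : ∀ i j, 0 ≤ w i j) (c : Fin n → ℕ) :
    ∃ (p : G → ℝ) (a : Fin n → Finset G),
      (∀ j, 0 ≤ p j) ∧
      (∀ i k, i ≠ k → Disjoint (a i) (a k)) ∧
      (∀ i, ∀ S : Finset G,
        capVal (w i) (c i) S - ∑ j ∈ S, p j ≤
          capVal (w i) (c i) (a i) - ∑ j ∈ a i, p j) ∧
      (∀ j, (∀ i, j ∉ a i) → p j = 0) := by
  have hcc : ∀ (w' : G → ℝ) (c' : ℕ) (S : Finset G),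
      capVal w' c' S = CapWalras.capVal' w' c' S := fun _ _ _ => rfl
  obtain ⟨p, a, h1, h2, h3, h4⟩ := capacitated_walrasian_exists' n w hw c
  refine ⟨p, a, h1, h2, ?_, h4⟩
  intro i S
  rw [hcc, hcc]
  exact h3 i S
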